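/- Let n > 1 and λ2, λ3 > 0, and set k* = λ2 (n-1)^((n-1)/n) / (n λ3). Then for every k ∈ (0, k*) the equation λ2 x^(n-1)/(λ3^n + x^n) = k has exactly two solutions in (0, ∞), for k = k* exactly one, and for k > k* none. -/

import Mathlib

open Real Set Filter Topology
set_option linter.unusedSectionVars false

noncomputable def phi (n lam3 : ℝ) : ℝ → ℝ := fun x => lam3 ^ n * x ^ (1 - n) + x
noncomputable def xst (n lam3 : ℝ) : ℝ := lam3 * (n - 1) ^ (n⁻¹ : ℝ)

section
variable {n lam3 : ℝ} (hn : 1 < n) (h3 : 0 < lam3)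
include hn h3

lemma phi_pos {x : ℝ} (hx : 0 < x) : 0 < phi n lam3 x := by
  have := rpow_pos_of_pos h3 n
  have := rpow_pos_of_pos hx (1 - n)
  unfold phi; positivity

lemma hasDerivAt_phi {x : ℝ} (hx : 0 < x) :
    HasDerivAt (phi n lam3) (lam3 ^ n * ((1 - n) * x ^ (-n)) + 1) x := by
  have h1 := (Real.hasDerivAt_rpow_const (p := 1 - n) (Or.inl hx.ne'))
  have : (1 - n) - 1 = -n := by ring
  rw [this] at h1
  exact (h1.const_mul _).add (hasDerivAt_id x)

lemma continuousOn_phi : ContinuousOn (phi n lam3) (Ioi 0) :=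
  fun x hx => ((hasDerivAt_phi hn h3 hx).continuousAt).continuousWithinAt

lemma xst_pos : 0 < xst n lam3 :=
  mul_pos h3 (rpow_pos_of_pos (by linarith) _)

lemma xst_rpow : (xst n lam3) ^ n = lam3 ^ n * (n - 1) := by
  have h1 : (0:ℝ) < n - 1 := by linarith
  rw [xst, mul_rpow h3.le (rpow_nonneg h1.le _), ← Real.rpow_mul h1.le,
    inv_mul_cancel₀ (by linarith : n ≠ 0), rpow_one]

lemma phi_deriv_neg {x : ℝ} (hx : 0 < x) (hxs : x < xst n lam3) :
    lam3 ^ n * ((1 - n) * x ^ (-n)) + 1 < 0 := by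
  have hxn : x ^ n < lam3 ^ n * (n - 1) := by
    rw [← xst_rpow hn h3]
    exact rpow_lt_rpow hx.le hxs (by linarith)
  have hxnpos : 0 < x ^ n := rpow_pos_of_pos hx n
  rw [Real.rpow_neg hx.le]
  have key : lam3 ^ n * ((1 - n) * (x ^ n)⁻¹) = (lam3 ^ n * (1 - n)) / x ^ n := by ring
  have h2 : (lam3 ^ n * (1 - n)) / x ^ n < -1 := by
    rw [div_lt_iff₀ hxnpos]; nlinarith
  linarith [key ▸ h2]

lemma phi_deriv_pos {x : ℝ} (hxs : xst n lam3 < x) :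
    0 < lam3 ^ n * ((1 - n) * x ^ (-n)) + 1 := by
  have hx : 0 < x := (xst_pos hn h3).trans hxs
  have hxn : lam3 ^ n * (n - 1) < x ^ n := by
    rw [← xst_rpow hn h3]
    exact rpow_lt_rpow (xst_pos hn h3).le hxs (by linarith)
  have hxnpos : 0 < x ^ n := rpow_pos_of_pos hx n
  rw [Real.rpow_neg hx.le]
  have key : lam3 ^ n * ((1 - n) * (x ^ n)⁻¹) = (lam3 ^ n * (1 - n)) / x ^ n := by ring
  have h2 : (-1 : ℝ) < (lam3 ^ n * (1 - n)) / x ^ n := by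
    rw [lt_div_iff₀ hxnpos]; nlinarith
  linarith [key ▸ h2]

lemma phi_anti : StrictAntiOn (phi n lam3) (Ioc 0 (xst n lam3)) := by
  apply strictAntiOn_of_deriv_neg (convex_Ioc 0 _)
  · exact (continuousOn_phi hn h3).mono (fun x hx => hx.1)
  · intro x hx
    rw [interior_Ioc] at hx
    rw [(hasDerivAt_phi hn h3 hx.1).deriv]
    exact phi_deriv_neg hn h3 hx.1 hx.2

lemma phi_mono : StrictMonoOn (phi n lam3) (Ici (xst n lam3)) := by
  apply strictMonoOn_of_deriv_pos (convex_Ici _)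
  · exact (continuousOn_phi hn h3).mono (fun x hx => (xst_pos hn h3).trans_le hx)
  · intro x hx
    rw [interior_Ici] at hx
    rw [(hasDerivAt_phi hn h3 ((xst_pos hn h3).trans hx)).deriv]
    exact phi_deriv_pos hn h3 hx

lemma phi_min {x : ℝ} (hx : 0 < x) (hne : x ≠ xst n lam3) :
    phi n lam3 (xst n lam3) < phi n lam3 x := by
  rcases lt_or_gt_of_ne hne with h | h
  · exact phi_anti hn h3 ⟨hx, h.le⟩ ⟨xst_pos hn h3, le_refl _⟩ h
  · exact phi_mono hn h3 (Set.mem_Ici.mpr le_rfl) h.le h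

lemma phi_xst_val : phi n lam3 (xst n lam3) = n * lam3 * (n - 1) ^ (n⁻¹ - 1) := by
  have h1 : (0:ℝ) < n - 1 := by linarith
  have he : (0:ℝ) < (n-1) ^ (n⁻¹ : ℝ) := rpow_pos_of_pos h1 _
  have hA : lam3 ^ n * lam3 ^ (1-n) = lam3 := by
    rw [← Real.rpow_add h3, show n+(1-n)=(1:ℝ) by ring, rpow_one]
  have hB : (n-1) ^ ((n⁻¹ : ℝ)*(1-n)) = (n-1) ^ ((n⁻¹:ℝ)-1) := by
    congr 1
    field_simp
  have hC : (n-1) ^ (n⁻¹:ℝ) = (n-1) ^ ((n⁻¹:ℝ)-1)*(n-1) := by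
    rw [← Real.rpow_add_one h1.ne', sub_add_cancel]
  rw [phi, xst, mul_rpow h3.le he.le, ← Real.rpow_mul h1.le, hB, hC]
  linear_combination ((n-1) ^ ((n⁻¹:ℝ) - 1)) * hA
lemma tendsto_phi_zero : Tendsto (phi n lam3) (𝓝[>] (0:ℝ)) atTop := by
  apply tendsto_atTop_mono' _ (f₁ := fun x => lam3 ^ n * x ^ (1 - n))
  · filter_upwards [self_mem_nhdsWithin] with x (hx : 0 < x)
    simp only [phi]
    linarith
  · apply Tendsto.const_mul_atTop (rpow_pos_of_pos h3 n)
    have h1 : Tendsto (fun x : ℝ => (x⁻¹) ^ (n - 1)) (𝓝[>] (0:ℝ)) atTop :=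
      (tendsto_rpow_atTop (by linarith : (0:ℝ) < n - 1)).comp tendsto_inv_nhdsGT_zero
    apply h1.congr'
    filter_upwards [self_mem_nhdsWithin] with x (hx : 0 < x)
    rw [← Real.rpow_neg_one x, ← Real.rpow_mul hx.le]
    congr 1
    ring

lemma tendsto_phi_atTop : Tendsto (phi n lam3) atTop atTop := by
  apply tendsto_atTop_mono' _ _ tendsto_id
  filter_upwards [eventually_gt_atTop (0:ℝ)] with x hx
  have := rpow_pos_of_pos h3 n
  have := rpow_pos_of_pos hx (1 - n)
  simp only [phi, id]
  nlinarith

lemma exists_left {c : ℝ} (hc : phi n lam3 (xst n lam3) < c) :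
    ∃ a, 0 < a ∧ a < xst n lam3 ∧ phi n lam3 a = c := by
  have h1 : ∀ᶠ x in 𝓝[>] (0:ℝ), c ≤ phi n lam3 x :=
    (tendsto_phi_zero hn h3).eventually_ge_atTop c
  have h2 : Ioo (0:ℝ) (xst n lam3) ∈ 𝓝[>] (0:ℝ) :=
    Ioo_mem_nhdsGT_of_mem ⟨le_refl _, xst_pos hn h3⟩
  obtain ⟨x0, hx0c, hx0⟩ := (h1.and (eventually_of_mem h2 (fun x hx => hx))).exists
  have hsub : Icc x0 (xst n lam3) ⊆ Ioi 0 := fun y hy => hx0.1.trans_le hy.1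
  have := intermediate_value_Icc' hx0.2.le ((continuousOn_phi hn h3).mono hsub)
  obtain ⟨a, ha, hac⟩ := this ⟨hc.le, hx0c⟩
  refine ⟨a, hx0.1.trans_le ha.1, lt_of_le_of_ne ha.2 ?_, hac⟩
  rintro rfl
  exact hc.ne hac

lemma exists_right {c : ℝ} (hc : phi n lam3 (xst n lam3) < c) :
    ∃ b, xst n lam3 < b ∧ phi n lam3 b = c := by
  have h1 : ∀ᶠ x in atTop, c ≤ phi n lam3 x :=
    (tendsto_phi_atTop hn h3).eventually_ge_atTop c
  obtain ⟨x1, hx1c, hx1⟩ := (h1.and (eventually_gt_atTop (xst n lam3))).exists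
  have hsub : Icc (xst n lam3) x1 ⊆ Ioi 0 := fun y hy => (xst_pos hn h3).trans_le hy.1
  have := intermediate_value_Icc hx1.le ((continuousOn_phi hn h3).mono hsub)
  obtain ⟨b, hb, hbc⟩ := this ⟨hc.le, hx1c⟩
  refine ⟨b, lt_of_le_of_ne hb.1 ?_, hbc⟩
  rintro rfl
  exact hc.ne hbc
end
theorem stmt_18 (n lam2 lam3 : ℝ) (hn : 1 < n) (h2 : 0 < lam2) (h3 : 0 < lam3)
    (g : ℝ → ℝ) (hg : ∀ x, g x = lam2 * x ^ (n - 1) / (lam3 ^ n + x ^ n))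
    (kstar : ℝ) (hkstar : kstar = lam2 * (n - 1) ^ ((n - 1) / n) / (n * lam3)) :
    (∀ k, 0 < k → k < kstar →
        ∃ a b, 0 < a ∧ a < b ∧ g a = k ∧ g b = k ∧
          ∀ x, 0 < x → g x = k → x = a ∨ x = b) ∧
      (∃! x, 0 < x ∧ g x = kstar) ∧
      ∀ k, kstar < k → ∀ x, 0 < x → g x ≠ k := by
  have hn1 : (0:ℝ) < n - 1 := by linarith
  have hn0 : (0:ℝ) < n := by linarith
  have hxp := xst_pos hn h3
  -- g in terms of phi
  have hgphi : ∀ x : ℝ, 0 < x → g x = lam2 / phi n lam3 x := by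
    intro x hx
    have key : phi n lam3 x * x ^ (n-1) = lam3 ^ n + x ^ n := by
      rw [phi, add_mul, mul_assoc, ← Real.rpow_add hx,
        show (1-n)+(n-1) = (0:ℝ) by ring, rpow_zero, mul_one, mul_comm x,
        ← Real.rpow_add_one hx.ne', sub_add_cancel]
    rw [hg, ← key, mul_div_mul_right _ _ (rpow_pos_of_pos hx (n-1)).ne']
  have hiff : ∀ x k : ℝ, 0 < x → 0 < k → (g x = k ↔ phi n lam3 x = lam2 / k) := by
    intro x k hx hk
    rw [hgphi x hx, div_eq_iff (phi_pos hn h3 hx).ne', eq_div_iff hk.ne',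
      mul_comm, eq_comm]
  have hkp : 0 < kstar := by
    have hd := rpow_pos_of_pos hn1 ((n-1)/n)
    rw [hkstar]
    exact div_pos (mul_pos h2 hd) (mul_pos hn0 h3)
  have hphik : phi n lam3 (xst n lam3) = lam2 / kstar := by
    have hd : (0:ℝ) < (n-1) ^ ((n-1)/n) := rpow_pos_of_pos hn1 _
    have he : (n-1:ℝ) ^ ((n⁻¹:ℝ)-1) = ((n-1) ^ ((n-1)/n))⁻¹ := by
      rw [← Real.rpow_neg hn1.le]
      congr 1
      field_simp
      ring
    rw [phi_xst_val hn h3, he, hkstar]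
    field_simp
  refine ⟨?_, ?_, ?_⟩
  · -- two solutions
    intro k hk0 hkk
    have hc : phi n lam3 (xst n lam3) < lam2 / k := by
      rw [hphik]
      exact div_lt_div_of_pos_left h2 hk0 hkk
    obtain ⟨a, ha0, haxst, hpa⟩ := exists_left hn h3 hc
    obtain ⟨b, hbxst, hpb⟩ := exists_right hn h3 hc
    refine ⟨a, b, ha0, haxst.trans hbxst, (hiff a k ha0 hk0).mpr hpa,
      (hiff b k (hxp.trans hbxst) hk0).mpr hpb, ?_⟩
    intro x hx hgx
    have hpx : phi n lam3 x = lam2 / k := (hiff x k hx hk0).mp hgx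
    rcases le_or_gt x (xst n lam3) with h | h
    · exact Or.inl ((phi_anti hn h3).injOn ⟨hx, h⟩ ⟨ha0, haxst.le⟩ (hpx.trans hpa.symm))
    · exact Or.inr ((phi_mono hn h3).injOn h.le hbxst.le (hpx.trans hpb.symm))
  · -- unique at kstar
    refine ⟨xst n lam3, ⟨hxp, (hiff _ kstar hxp hkp).mpr hphik⟩, ?_⟩
    rintro y ⟨hy0, hgy⟩
    have hpy : phi n lam3 y = lam2 / kstar := (hiff y kstar hy0 hkp).mp hgy
    by_contra hne
    exact absurd (hpy.trans hphik.symm) (phi_min hn h3 hy0 hne).ne'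
  · -- none above kstar
    intro k hk x hx hgx
    have hle : phi n lam3 (xst n lam3) ≤ phi n lam3 x := by
      rcases eq_or_ne x (xst n lam3) with rfl | hne
      · exact le_refl _
      · exact (phi_min hn h3 hx hne).le
    have h1 : g x ≤ kstar := by
      rw [hgphi x hx]
      calc lam2 / phi n lam3 x ≤ lam2 / phi n lam3 (xst n lam3) :=
            div_le_div_of_nonneg_left h2.le (phi_pos hn h3 hxp) hle
        _ = kstar := by rw [hphik]; field_simp
    linarith [hgx ▸ h1]
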